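/- Let ℤ_p be the p-adic integers. For α, β ∈ ℤ_p, the reductions mod p of the binomial coefficient sequences coincide, i.e., (α choose n) ≡ (β choose n) mod p for all n ≥ 0, if and only if α = β. More precisely: if (α choose n) ≡ 0 mod p for all n ≥ 1 then α = 0. -/

import Mathlib

open Finset Polynomial

/-- The binomial coefficient `(α choose n) = α(α−1)⋯(α−n+1)/n!` of a `p`-adic integer `α`,
computed in `ℚ_p` (it actually lies in `ℤ_p`). -/
noncomputable def pchoose (p : ℕ) [Fact p.Prime] (α : ℤ_[p]) (n : ℕ) : ℚ_[p] :=
  (((descPochhammer ℤ_[p] n).eval α : ℤ_[p]) : ℚ_[p]) / (n.factorial : ℚ_[p])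

lemma pchoose_aux_smeval_eq_eval (p : ℕ) [Fact p.Prime] (n : ℕ) (α : ℤ_[p]) :
    (descPochhammer ℤ n).smeval α = (descPochhammer ℤ_[p] n).eval α := by
  induction n with
  | zero => simp [descPochhammer_zero, Polynomial.smeval_one]
  | succ n ih =>
    rw [descPochhammer_succ_right, descPochhammer_succ_right, Polynomial.smeval_mul,
      Polynomial.eval_mul, ih, Polynomial.smeval_sub, Polynomial.eval_sub,
      Polynomial.smeval_X, Polynomial.eval_X, Polynomial.smeval_natCast, Polynomial.eval_natCast]
    simp

lemma pchoose_eq_choose (p : ℕ) [Fact p.Prime] (α : ℤ_[p]) (n : ℕ) :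
    pchoose p α n = ((Ring.choose α n : ℤ_[p]) : ℚ_[p]) := by
  have h := Ring.descPochhammer_eq_factorial_smul_choose α n
  rw [pchoose_aux_smeval_eq_eval] at h
  rw [pchoose, h]
  push_cast [nsmul_eq_mul]
  rw [mul_div_cancel_left₀]
  exact_mod_cast n.factorial_ne_zero

lemma norm_pchoose (p : ℕ) [Fact p.Prime] (α : ℤ_[p]) (n : ℕ) :
    ‖pchoose p α n‖ = ‖Ring.choose α n‖ := by
  rw [pchoose_eq_choose]; rfl

lemma pchoose_aux_descPochhammer_eval_prod (R : Type*) [CommRing R] (n : ℕ) (r : R) :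
    (descPochhammer R n).eval r = ∏ j ∈ range n, (r - j) := by
  induction n with
  | zero => simp
  | succ n ih => rw [descPochhammer_succ_eval, ih, prod_range_succ]

/-- If `α ≠ 0` then some binomial coefficient `(α choose n)`, `n ≥ 1`, is a `p`-adic unit. -/
lemma pchoose_key (p : ℕ) [Fact p.Prime] (α : ℤ_[p]) (hα : α ≠ 0) :
    ∃ n : ℕ, 1 ≤ n ∧ ‖pchoose p α n‖ = 1 := by
  have hp := (Fact.out : p.Prime)
  set m : ℕ := α.valuation with hm
  have hval : (α.valuation : ℤ) = (m : ℤ) := rfl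
  have hnorm : ‖α‖ = (p : ℝ) ^ (-(m : ℤ)) := by
    rw [PadicInt.norm_eq_zpow_neg_valuation hα]
  obtain ⟨k, hk⟩ : ∃ k, p ^ m = k + 1 :=
    ⟨p ^ m - 1, (Nat.succ_pred_eq_of_pos (pow_pos hp.pos m)).symm⟩
  refine ⟨p ^ m, Nat.one_le_iff_ne_zero.mpr (pow_ne_zero m hp.pos.ne'), ?_⟩
  have hterm : ∀ j : ℕ, 1 ≤ j → j < p ^ m →
      ‖(α : ℚ_[p]) - (j : ℚ_[p])‖ = ‖(j : ℚ_[p])‖ := by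
    intro j hj1 hj2
    have hdvd : ¬ ((p ^ m : ℤ) ∣ (j : ℤ)) := by
      intro h
      have h2 : (p : ℤ) ^ m ≤ (j : ℤ) := by
        have := Int.le_of_dvd (by exact_mod_cast hj1) h
        exact_mod_cast this
      have h3 : (j : ℤ) < (p : ℤ) ^ m := by exact_mod_cast hj2
      omega
    have hQZ : ‖(j : ℚ_[p])‖ = ‖((j : ℕ) : ℤ_[p])‖ := by
      rw [PadicInt.norm_def]; norm_cast
    have hgt : (p : ℝ) ^ (-(m : ℤ)) < ‖(j : ℚ_[p])‖ := by
      rw [hQZ]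
      by_contra hle
      push_neg at hle
      apply hdvd
      apply PadicInt.norm_int_le_pow_iff_dvd.mp
      exact_mod_cast hle
    have hne : ‖(α : ℚ_[p])‖ ≠ ‖(-(j : ℚ_[p]))‖ := by
      rw [norm_neg, show ‖(α:ℚ_[p])‖ = ‖α‖ from rfl, hnorm]
      exact ne_of_lt hgt
    have hmax := Padic.add_eq_max_of_ne hne
    rw [← sub_eq_add_neg] at hmax
    rw [hmax, norm_neg, max_eq_right]
    rw [show ‖(α:ℚ_[p])‖ = ‖α‖ from rfl, hnorm]
    exact le_of_lt hgt
  have hcoe : ((((descPochhammer ℤ_[p] (p^m)).eval α : ℤ_[p])) : ℚ_[p])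
      = ∏ j ∈ range (p ^ m), ((α : ℚ_[p]) - (j : ℚ_[p])) := by
    rw [pchoose_aux_descPochhammer_eval_prod]
    rw [show (((∏ j ∈ range (p ^ m), (α - (j:ℤ_[p]))) : ℤ_[p]) : ℚ_[p])
        = (PadicInt.Coe.ringHom : ℤ_[p] →+* ℚ_[p]) (∏ j ∈ range (p ^ m), (α - (j:ℤ_[p]))) from rfl,
      map_prod]
    rfl
  have hfac : ((p ^ m).factorial : ℚ_[p]) = ∏ j ∈ range (p ^ m), ((j : ℚ_[p]) + 1) := by
    rw [← Finset.prod_range_add_one_eq_factorial]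
    push_cast
    rfl
  rw [pchoose, hcoe, hfac, norm_div, norm_prod, norm_prod]
  rw [hk, prod_range_succ', prod_range_succ]
  push_cast
  rw [sub_zero]
  have hstep : ∀ j ∈ range k, ‖(α : ℚ_[p]) - ((j:ℚ_[p]) + 1)‖ = ‖((j:ℚ_[p]) + 1)‖ := by
    intro j hj
    have hj' := mem_range.mp hj
    have := hterm (j+1) (by omega) (by omega)
    push_cast at this
    convert this using 3
  rw [Finset.prod_congr rfl hstep]
  have hlast : ‖(α : ℚ_[p])‖ = ‖α‖ := rfl
  have hklast : ‖((k : ℚ_[p]) + 1)‖ = (p : ℝ) ^ (-(m:ℤ)) := by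
    have : ((k : ℚ_[p]) + 1) = ((p : ℚ_[p]) ^ m) := by
      exact_mod_cast (congrArg (fun n : ℕ => (n : ℚ_[p])) hk).symm
    rw [this, Padic.norm_p_pow]
  have hP : (∏ j ∈ range k, ‖((j:ℚ_[p]) + 1)‖) ≠ 0 := by
    apply Finset.prod_ne_zero_iff.mpr
    intro j hj
    simp only [norm_ne_zero_iff]
    exact Nat.cast_add_one_ne_zero j
  rw [hlast, hklast, hnorm]
  field_simp
  exact div_self (zpow_ne_zero _ (by exact_mod_cast hp.ne_zero))

/-- For `α, β ∈ ℤ_p`, the reductions mod `p` of the binomial coefficients coincide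
(`(α choose n) ≡ (β choose n) mod p` for all `n`, i.e. the difference has norm `< 1`)
if and only if `α = β`; and the key special case: if `(α choose n) ≡ 0 mod p` for all
`n ≥ 1`, then `α = 0`. -/
theorem stmt11 (p : ℕ) [Fact p.Prime] :
    (∀ α β : ℤ_[p], (∀ n : ℕ, ‖pchoose p α n - pchoose p β n‖ < 1) ↔ α = β) ∧
    (∀ α : ℤ_[p], (∀ n : ℕ, 1 ≤ n → ‖pchoose p α n‖ < 1) → α = 0) := by
  have part2 : ∀ α : ℤ_[p], (∀ n : ℕ, 1 ≤ n → ‖pchoose p α n‖ < 1) → α = 0 := by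
    intro α h
    by_contra hα
    obtain ⟨n, hn1, hn⟩ := pchoose_key p α hα
    exact absurd (h n hn1) (by rw [hn]; exact lt_irrefl 1)
  refine ⟨fun α β => ⟨fun h => ?_, fun h => by subst h; simp⟩, part2⟩
  -- forward direction
  set γ := α - β with hγ
  have hdvd : ∀ n : ℕ, 1 ≤ n → (p : ℤ_[p]) ∣ Ring.choose γ n := by
    intro n
    induction n using Nat.strong_induction_on with
    | _ n ih =>
      intro hn1
      have hvdm := Ring.add_choose_eq n (Commute.all γ β)
      rw [show γ + β = α by rw [hγ]; ring] at hvdm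
      rw [Finset.Nat.sum_antidiagonal_eq_sum_range_succ_mk, Finset.sum_range_succ] at hvdm
      rw [Finset.range_eq_Ico, Finset.sum_eq_sum_Ico_succ_bot (by omega : 0 < n)] at hvdm
      simp only [Nat.sub_self, Nat.sub_zero, Ring.choose_zero_right, one_mul, mul_one] at hvdm
      have heq : Ring.choose γ n =
          (Ring.choose α n - Ring.choose β n) - ∑ k ∈ Finset.Ico 1 n,
            Ring.choose γ k * Ring.choose β (n - k) := by
        rw [hvdm]; ring
      rw [heq]
      apply dvd_sub
      · rw [← PadicInt.norm_lt_one_iff_dvd]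
        have := h n
        rw [pchoose_eq_choose, pchoose_eq_choose] at this
        rw [PadicInt.norm_def]
        push_cast
        exact this
      · apply Finset.dvd_sum
        intro k hk
        have hk' := Finset.mem_Ico.mp hk
        exact (ih k hk'.2 hk'.1).mul_right _
  have hγ0 : γ = 0 := by
    apply part2
    intro n hn1
    rw [norm_pchoose, PadicInt.norm_lt_one_iff_dvd]
    exact hdvd n hn1
  have := sub_eq_zero.mp hγ0
  exact this
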